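/- Let n ≥ 2, 0 ≤ p ≤ q and u ∈ ℂ^{2n}. With β_j = ((−1)^j·(2n−1+p+q)/j!)·(2n−2+p+q−j)!/(2n−1+p+q)! for 0 ≤ j ≤ p, the harmonic projection of the symplectic kernel is: ∑_{j=0}^{p} β_j·‖z‖^{2j}·Δ_z^j Z^S_{p,q}(z,u) = c_{p,q}·⟨z̄,u⟩^{q−p}·∑_{j=0}^{p} C(p+2n−3, p−j)·C(q+1, j)·(T − ‖z‖²‖u‖²)^j·T^{p−j}, where T denotes the polynomial ⟨z,ū⟩⟨z̄,u⟩ + ⟨z,u⟩_s·⟨z̄,ū⟩_s and c_{p,q} = (q−p+1)·(q+2n−2)!/((p+q+2n−2)!·(q+1)!). (Equivalently, the right-hand side equals c_{p,q}·⟨z̄,u⟩^{q−p}·‖z‖^{2p}‖u‖^{2p}·P_p^{(2n−3,q−p+1)}(2t−1) with t = T/(‖z‖²‖u‖²) and P the Jacobi polynomial.) -/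

import Mathlib

open MvPolynomial

noncomputable section

/-- The inclusion `Fin n → Fin (2n)`, `j ↦ j`. -/
def il (n : ℕ) (j : Fin n) : Fin (2 * n) := ⟨j.1, by have := j.2; omega⟩

/-- The inclusion `Fin n → Fin (2n)`, `j ↦ n + j`. -/
def ir (n : ℕ) (j : Fin n) : Fin (2 * n) := ⟨n + j.1, by have := j.2; omega⟩

/-- Bihomogeneous of bidegree `(p,q)` on `ℂ^{2n}`
(variables `Sum.inl j = z_j`, `Sum.inr j = z̄_j`, `j : Fin 2n`). -/
def BiHom (n : ℕ) (P : MvPolynomial (Fin (2 * n) ⊕ Fin (2 * n)) ℂ) (p q : ℕ) : Prop :=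
  ∀ α ∈ P.support,
    (∑ j : Fin (2 * n), α (Sum.inl j)) = p ∧ (∑ j : Fin (2 * n), α (Sum.inr j)) = q

/-- The twisted Euler operator `E = ∑_{j=1}^n (z_j ∂_{z̄_{n+j}} − z_{n+j} ∂_{z̄_j})`. -/
def Eop (n : ℕ) (P : MvPolynomial (Fin (2 * n) ⊕ Fin (2 * n)) ℂ) :
    MvPolynomial (Fin (2 * n) ⊕ Fin (2 * n)) ℂ :=
  ∑ j : Fin n,
    (X (Sum.inl (il n j)) * pderiv (Sum.inr (ir n j)) P
      - X (Sum.inl (ir n j)) * pderiv (Sum.inr (il n j)) P)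

/-- The twisted Euler operator `E† = −∑_{j=1}^n (z̄_j ∂_{z_{n+j}} − z̄_{n+j} ∂_{z_j})`. -/
def Edag (n : ℕ) (P : MvPolynomial (Fin (2 * n) ⊕ Fin (2 * n)) ℂ) :
    MvPolynomial (Fin (2 * n) ⊕ Fin (2 * n)) ℂ :=
  -∑ j : Fin n,
    (X (Sum.inr (il n j)) * pderiv (Sum.inl (ir n j)) P
      - X (Sum.inr (ir n j)) * pderiv (Sum.inl (il n j)) P)


/-- The polynomial `⟨z,ū⟩ = ∑_{j=1}^{2n} conj(u_j) z_j`. -/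
def Apoly (n : ℕ) (u : Fin (2 * n) → ℂ) : MvPolynomial (Fin (2 * n) ⊕ Fin (2 * n)) ℂ :=
  ∑ j : Fin (2 * n), C ((starRingEnd ℂ) (u j)) * X (Sum.inl j)

/-- The polynomial `⟨z̄,u⟩ = ∑_{j=1}^{2n} u_j z̄_j`. -/
def Bpoly (n : ℕ) (u : Fin (2 * n) → ℂ) : MvPolynomial (Fin (2 * n) ⊕ Fin (2 * n)) ℂ :=
  ∑ j : Fin (2 * n), C (u j) * X (Sum.inr j)

/-- The polynomial `⟨z,u⟩_s = ∑_{j=1}^{n} (z_j u_{n+j} − z_{n+j} u_j)`. -/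
def Cpoly (n : ℕ) (u : Fin (2 * n) → ℂ) : MvPolynomial (Fin (2 * n) ⊕ Fin (2 * n)) ℂ :=
  ∑ j : Fin n,
    (C (u (ir n j)) * X (Sum.inl (il n j)) - C (u (il n j)) * X (Sum.inl (ir n j)))

/-- The polynomial `⟨z̄,ū⟩_s = ∑_{j=1}^{n} (z̄_j conj(u_{n+j}) − z̄_{n+j} conj(u_j))`. -/
def Cbarpoly (n : ℕ) (u : Fin (2 * n) → ℂ) : MvPolynomial (Fin (2 * n) ⊕ Fin (2 * n)) ℂ :=
  ∑ j : Fin n,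
    (C ((starRingEnd ℂ) (u (ir n j))) * X (Sum.inr (il n j))
      - C ((starRingEnd ℂ) (u (il n j))) * X (Sum.inr (ir n j)))

/-- The symplectic kernel
`Z^S_{p,q}(z,u) = ((q−p+1)/(p!(q+1)!)) ⟨z̄,u⟩^{q−p} (⟨z,ū⟩⟨z̄,u⟩ + ⟨z,u⟩_s ⟨z̄,ū⟩_s)^p`. -/
def Zsymp (n p q : ℕ) (u : Fin (2 * n) → ℂ) : MvPolynomial (Fin (2 * n) ⊕ Fin (2 * n)) ℂ :=
  C ((((q - p + 1 : ℕ) : ℂ)) / ((p.factorial : ℂ) * ((q + 1).factorial : ℂ))) *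
    Bpoly n u ^ (q - p) *
    (Apoly n u * Bpoly n u + Cpoly n u * Cbarpoly n u) ^ p

/-- The complex Laplacian `Δ_z = ∑_{j=1}^{2n} ∂_{z̄_j} ∂_{z_j}`. -/
def clap (n : ℕ) (P : MvPolynomial (Fin (2 * n) ⊕ Fin (2 * n)) ℂ) :
    MvPolynomial (Fin (2 * n) ⊕ Fin (2 * n)) ℂ :=
  ∑ j : Fin (2 * n), pderiv (Sum.inr j) (pderiv (Sum.inl j) P)

/-- The polynomial `‖z‖² = ∑_{j=1}^{2n} z_j z̄_j`. -/
def r2poly (n : ℕ) : MvPolynomial (Fin (2 * n) ⊕ Fin (2 * n)) ℂ :=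
  ∑ j : Fin (2 * n), X (Sum.inl j) * X (Sum.inr j)

/-- `‖u‖² = ∑_{j=1}^{2n} |u_j|²` as a complex scalar. -/
def u2 (n : ℕ) (u : Fin (2 * n) → ℂ) : ℂ := ∑ j : Fin (2 * n), u j * (starRingEnd ℂ) (u j)

/-- The coefficients `β_j = ((−1)^j (2n−1+p+q)/j!)·(2n−2+p+q−j)!/(2n−1+p+q)!`. -/
def betaCoeff (n p q j : ℕ) : ℂ :=
  ((-1 : ℂ) ^ j * ((2 * n - 1 + p + q : ℕ) : ℂ) / (j.factorial : ℂ)) *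
    (((2 * n - 2 + p + q - j).factorial : ℕ) : ℂ) / (((2 * n - 1 + p + q).factorial : ℕ) : ℂ)

/-- The constant `c_{p,q} = (q−p+1)(q+2n−2)!/((p+q+2n−2)!(q+1)!)`. -/
def cConst (n p q : ℕ) : ℂ :=
  ((q - p + 1 : ℕ) : ℂ) * ((q + 2 * n - 2).factorial : ℂ) /
    (((p + q + 2 * n - 2).factorial : ℂ) * ((q + 1).factorial : ℂ))


section AUX

/-- Split a sum over `Fin (2n)` into two sums over `Fin n`. -/
lemma sum_split {M : Type*} [AddCommMonoid M] (n : ℕ) (f : Fin (2 * n) → M) :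
    ∑ j, f j = (∑ j : Fin n, f (il n j)) + ∑ j : Fin n, f (ir n j) := by
  have h : (n + n) = 2 * n := by omega
  rw [← Fin.sum_congr' f h, Fin.sum_univ_add]
  congr 1 <;> (apply Finset.sum_congr rfl; intro i _; congr 1; apply Fin.ext; simp [il, ir])

/-- The coefficient vector of `∂_z ⟨z,u⟩_s`. -/
def vv (n : ℕ) (u : Fin (2 * n) → ℂ) (j : Fin (2 * n)) : ℂ :=
  if h : (j : ℕ) < n then u ⟨n + (j : ℕ), by omega⟩
  else -u ⟨(j : ℕ) - n, by have := j.2; omega⟩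

lemma vv_il (n : ℕ) (u : Fin (2 * n) → ℂ) (j : Fin n) : vv n u (il n j) = u (ir n j) := by
  have h : ((il n j : Fin (2*n)) : ℕ) < n := j.2
  simp only [vv, dif_pos h]; congr 1

lemma vv_ir (n : ℕ) (u : Fin (2 * n) → ℂ) (j : Fin n) : vv n u (ir n j) = -u (il n j) := by
  have h : ¬ ((ir n j : Fin (2*n)) : ℕ) < n := by simp [ir]
  simp only [vv, dif_neg h]; congr 2; simp [ir, il]


lemma sum_u_vv (n : ℕ) (u : Fin (2 * n) → ℂ) : ∑ j, u j * vv n u j = 0 := by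
  rw [sum_split, ← Finset.sum_add_distrib]
  apply Finset.sum_eq_zero; intro i _
  rw [vv_il, vv_ir]; ring

lemma sum_cvv_cu (n : ℕ) (u : Fin (2 * n) → ℂ) :
    ∑ j, (starRingEnd ℂ) (vv n u j) * (starRingEnd ℂ) (u j) = 0 := by
  rw [sum_split, ← Finset.sum_add_distrib]
  apply Finset.sum_eq_zero; intro i _
  rw [vv_il, vv_ir]; simp; ring

lemma sum_vv_cvv (n : ℕ) (u : Fin (2 * n) → ℂ) :
    ∑ j, vv n u j * (starRingEnd ℂ) (vv n u j) = u2 n u := by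
  rw [sum_split]
  have h2 : u2 n u = (∑ j : Fin n, u (il n j) * (starRingEnd ℂ) (u (il n j)))
      + ∑ j : Fin n, u (ir n j) * (starRingEnd ℂ) (u (ir n j)) := sum_split n _
  rw [h2, add_comm]
  congr 1 <;> apply Finset.sum_congr rfl <;> intro i _
  all_goals first
    | rw [vv_il]
    | (rw [vv_ir]; simp only [map_neg]; ring)

lemma sum_u_cu (n : ℕ) (u : Fin (2 * n) → ℂ) :
    ∑ j, u j * (starRingEnd ℂ) (u j) = u2 n u := rfl

/-- Generic: `∂_{z_k}` of `∑ C (c j) z_j`. -/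
lemma pdXll (n : ℕ) (c : Fin (2 * n) → ℂ) (k : Fin (2 * n)) :
    pderiv (Sum.inl k) (∑ j : Fin (2 * n), C (c j) * (X (Sum.inl j) :
      MvPolynomial (Fin (2 * n) ⊕ Fin (2 * n)) ℂ)) = C (c k) := by
  rw [map_sum, Finset.sum_eq_single k]
  · simp
  · intro b _ hb
    rw [pderiv_C_mul, pderiv_X_of_ne (by simp [hb]), mul_zero]
  · simp

lemma pdXlr (n : ℕ) (c : Fin (2 * n) → ℂ) (k : Fin (2 * n)) :
    pderiv (Sum.inr k) (∑ j : Fin (2 * n), C (c j) * (X (Sum.inl j) :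
      MvPolynomial (Fin (2 * n) ⊕ Fin (2 * n)) ℂ)) = 0 := by
  rw [map_sum, Finset.sum_eq_zero]
  intro b _
  rw [pderiv_C_mul, pderiv_X_of_ne (by simp), mul_zero]

lemma pdXrr (n : ℕ) (c : Fin (2 * n) → ℂ) (k : Fin (2 * n)) :
    pderiv (Sum.inr k) (∑ j : Fin (2 * n), C (c j) * (X (Sum.inr j) :
      MvPolynomial (Fin (2 * n) ⊕ Fin (2 * n)) ℂ)) = C (c k) := by
  rw [map_sum, Finset.sum_eq_single k]
  · simp
  · intro b _ hb
    rw [pderiv_C_mul, pderiv_X_of_ne (by simp [hb]), mul_zero]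
  · simp

lemma pdXrl (n : ℕ) (c : Fin (2 * n) → ℂ) (k : Fin (2 * n)) :
    pderiv (Sum.inl k) (∑ j : Fin (2 * n), C (c j) * (X (Sum.inr j) :
      MvPolynomial (Fin (2 * n) ⊕ Fin (2 * n)) ℂ)) = 0 := by
  rw [map_sum, Finset.sum_eq_zero]
  intro b _
  rw [pderiv_C_mul, pderiv_X_of_ne (by simp), mul_zero]

lemma Cp_eq (n : ℕ) (u : Fin (2 * n) → ℂ) :
    Cpoly n u = ∑ j : Fin (2 * n), C (vv n u j) * X (Sum.inl j) := by
  rw [sum_split n (fun j => (C (vv n u j) * X (Sum.inl j) :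
    MvPolynomial (Fin (2 * n) ⊕ Fin (2 * n)) ℂ)), Cpoly, ← Finset.sum_add_distrib]
  apply Finset.sum_congr rfl; intro i _
  rw [vv_il, vv_ir]; simp; ring

lemma Cb_eq (n : ℕ) (u : Fin (2 * n) → ℂ) :
    Cbarpoly n u = ∑ j : Fin (2 * n), C ((starRingEnd ℂ) (vv n u j)) * X (Sum.inr j) := by
  rw [sum_split n (fun j => (C ((starRingEnd ℂ) (vv n u j)) * X (Sum.inr j) :
    MvPolynomial (Fin (2 * n) ⊕ Fin (2 * n)) ℂ)), Cbarpoly, ← Finset.sum_add_distrib]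
  apply Finset.sum_congr rfl; intro i _
  rw [vv_il, vv_ir]; simp; ring

variable {n : ℕ} (u : Fin (2 * n) → ℂ)

lemma pd_A_l (k : Fin (2 * n)) :
    pderiv (Sum.inl k) (Apoly n u) = C ((starRingEnd ℂ) (u k)) := pdXll n _ k
lemma pd_A_r (k : Fin (2 * n)) : pderiv (Sum.inr k) (Apoly n u) = 0 := pdXlr n _ k
lemma pd_B_r (k : Fin (2 * n)) : pderiv (Sum.inr k) (Bpoly n u) = C (u k) := pdXrr n _ k
lemma pd_B_l (k : Fin (2 * n)) : pderiv (Sum.inl k) (Bpoly n u) = 0 := pdXrl n _ k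
lemma pd_Cp_l (k : Fin (2 * n)) : pderiv (Sum.inl k) (Cpoly n u) = C (vv n u k) := by
  rw [Cp_eq]; exact pdXll n _ k
lemma pd_Cp_r (k : Fin (2 * n)) : pderiv (Sum.inr k) (Cpoly n u) = 0 := by
  rw [Cp_eq]; exact pdXlr n _ k
lemma pd_Cb_r (k : Fin (2 * n)) :
    pderiv (Sum.inr k) (Cbarpoly n u) = C ((starRingEnd ℂ) (vv n u k)) := by
  rw [Cb_eq]; exact pdXrr n _ k
lemma pd_Cb_l (k : Fin (2 * n)) : pderiv (Sum.inl k) (Cbarpoly n u) = 0 := by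
  rw [Cb_eq]; exact pdXrl n _ k

/-- `T = AB + C C̄`. -/
def Tpoly (n : ℕ) (u : Fin (2 * n) → ℂ) : MvPolynomial (Fin (2 * n) ⊕ Fin (2 * n)) ℂ :=
  Apoly n u * Bpoly n u + Cpoly n u * Cbarpoly n u

lemma pd_T_l (k : Fin (2 * n)) :
    pderiv (Sum.inl k) (Tpoly n u)
      = C ((starRingEnd ℂ) (u k)) * Bpoly n u + C (vv n u k) * Cbarpoly n u := by
  simp [Tpoly, pderiv_mul, pd_A_l, pd_B_l, pd_Cp_l, pd_Cb_l]; ring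

lemma pd_T_r (k : Fin (2 * n)) :
    pderiv (Sum.inr k) (Tpoly n u)
      = C (u k) * Apoly n u + C ((starRingEnd ℂ) (vv n u k)) * Cpoly n u := by
  simp [Tpoly, pderiv_mul, pd_A_r, pd_B_r, pd_Cp_r, pd_Cb_r]; ring

lemma cast_pow_pred {R : Type*} [CommSemiring R] (a : R) (m : ℕ) :
    (m : R) * a ^ (m - 1) * a = (m : R) * a ^ m := by
  cases m with
  | zero => simp
  | succ m => rw [Nat.add_sub_cancel, mul_assoc, ← pow_succ]

lemma sum_CD1 :
    ∑ j, C (u j) * (C ((starRingEnd ℂ) (u j)) * Bpoly n u + C (vv n u j) * Cbarpoly n u)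
      = C (u2 n u) * Bpoly n u := by
  calc ∑ j, C (u j) * (C ((starRingEnd ℂ) (u j)) * Bpoly n u + C (vv n u j) * Cbarpoly n u)
      = (∑ j, C (u j * (starRingEnd ℂ) (u j))) * Bpoly n u
        + (∑ j, C (u j * vv n u j)) * Cbarpoly n u := by
        rw [Finset.sum_mul, Finset.sum_mul, ← Finset.sum_add_distrib]
        apply Finset.sum_congr rfl; intro j _
        simp only [map_mul]; ring
    _ = C (u2 n u) * Bpoly n u := by
        rw [← map_sum, ← map_sum, sum_u_cu, sum_u_vv]; simp

lemma sum_D2D1 :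
    ∑ j, (C (u j) * Apoly n u + C ((starRingEnd ℂ) (vv n u j)) * Cpoly n u)
        * (C ((starRingEnd ℂ) (u j)) * Bpoly n u + C (vv n u j) * Cbarpoly n u)
      = C (u2 n u) * Tpoly n u := by
  calc ∑ j, (C (u j) * Apoly n u + C ((starRingEnd ℂ) (vv n u j)) * Cpoly n u)
        * (C ((starRingEnd ℂ) (u j)) * Bpoly n u + C (vv n u j) * Cbarpoly n u)
      = (∑ j, C (u j * (starRingEnd ℂ) (u j))) * (Apoly n u * Bpoly n u)
        + (∑ j, C (u j * vv n u j)) * (Apoly n u * Cbarpoly n u)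
        + (∑ j, C ((starRingEnd ℂ) (vv n u j) * (starRingEnd ℂ) (u j)))
            * (Cpoly n u * Bpoly n u)
        + (∑ j, C (vv n u j * (starRingEnd ℂ) (vv n u j))) * (Cpoly n u * Cbarpoly n u) := by
        simp only [Finset.sum_mul]
        rw [← Finset.sum_add_distrib, ← Finset.sum_add_distrib, ← Finset.sum_add_distrib]
        apply Finset.sum_congr rfl; intro j _
        simp only [map_mul]; ring
    _ = C (u2 n u) * Tpoly n u := by
        rw [← map_sum, ← map_sum, ← map_sum, ← map_sum, sum_u_cu, sum_u_vv, sum_cvv_cu,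
          sum_vv_cvv, Tpoly]
        simp; ring

lemma sum_diag :
    ∑ j, (C ((starRingEnd ℂ) (u j)) * C (u j) + C (vv n u j) * C ((starRingEnd ℂ) (vv n u j)))
      = (C (2 * u2 n u) : MvPolynomial (Fin (2 * n) ⊕ Fin (2 * n)) ℂ) := by
  have h1 : ∑ j, u j * (starRingEnd ℂ) (u j) = u2 n u := sum_u_cu n u
  calc ∑ j, (C ((starRingEnd ℂ) (u j)) * C (u j)
        + C (vv n u j) * C ((starRingEnd ℂ) (vv n u j)) :
          MvPolynomial (Fin (2 * n) ⊕ Fin (2 * n)) ℂ)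
      = C ((∑ j, u j * (starRingEnd ℂ) (u j))
          + ∑ j, vv n u j * (starRingEnd ℂ) (vv n u j)) := by
        rw [map_add, map_sum, map_sum, ← Finset.sum_add_distrib]
        apply Finset.sum_congr rfl; intro j _
        simp only [map_mul]; ring
    _ = C (2 * u2 n u) := by rw [h1, sum_vv_cvv]; ring_nf

/-- The key Laplacian computation: `Δ (B^m T^{k+1}) = (k+1)(m+k+2) ‖u‖² B^m T^k`. -/
lemma clap_BT (m k : ℕ) :
    clap n (Bpoly n u ^ m * Tpoly n u ^ (k + 1))
      = C ((((k + 1) * (m + k + 2) : ℕ) : ℂ) * u2 n u)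
          * (Bpoly n u ^ m * Tpoly n u ^ k) := by
  have h1 : ∀ j : Fin (2 * n),
      pderiv (Sum.inl j) (Bpoly n u ^ m * Tpoly n u ^ (k + 1))
        = C (((k + 1 : ℕ) : ℂ)) * (Bpoly n u ^ m * (Tpoly n u ^ k *
            (C ((starRingEnd ℂ) (u j)) * Bpoly n u + C (vv n u j) * Cbarpoly n u))) := by
    intro j
    rw [pderiv_mul, pderiv_pow, pderiv_pow, pd_B_l, pd_T_l]
    push_cast
    ring_nf
    simp [Nat.add_sub_cancel]
    ring
  have h2 : ∀ j : Fin (2 * n),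
      pderiv (Sum.inr j) (Bpoly n u ^ m * (Tpoly n u ^ k *
          (C ((starRingEnd ℂ) (u j)) * Bpoly n u + C (vv n u j) * Cbarpoly n u)))
        = ((m : MvPolynomial (Fin (2 * n) ⊕ Fin (2 * n)) ℂ) * Bpoly n u ^ (m - 1)
              * C (u j)) * Tpoly n u ^ k
              * (C ((starRingEnd ℂ) (u j)) * Bpoly n u + C (vv n u j) * Cbarpoly n u)
          + Bpoly n u ^ m * ((k : MvPolynomial (Fin (2 * n) ⊕ Fin (2 * n)) ℂ)
              * Tpoly n u ^ (k - 1)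
              * (C (u j) * Apoly n u + C ((starRingEnd ℂ) (vv n u j)) * Cpoly n u))
              * (C ((starRingEnd ℂ) (u j)) * Bpoly n u + C (vv n u j) * Cbarpoly n u)
          + Bpoly n u ^ m * Tpoly n u ^ k
              * (C ((starRingEnd ℂ) (u j)) * C (u j)
                  + C (vv n u j) * C ((starRingEnd ℂ) (vv n u j))) := by
    intro j
    rw [pderiv_mul, pderiv_pow, pd_B_r, pderiv_mul, pderiv_pow, pd_T_r,
      map_add, pderiv_C_mul, pderiv_C_mul, pd_B_r, pd_Cb_r]
    ring
  rw [clap]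
  calc ∑ j : Fin (2 * n), pderiv (Sum.inr j)
        (pderiv (Sum.inl j) (Bpoly n u ^ m * Tpoly n u ^ (k + 1)))
      = C (((k + 1 : ℕ) : ℂ)) * (
          ((m : MvPolynomial (Fin (2 * n) ⊕ Fin (2 * n)) ℂ) * Bpoly n u ^ (m - 1))
            * Tpoly n u ^ k * (∑ j, C (u j) * (C ((starRingEnd ℂ) (u j)) * Bpoly n u
              + C (vv n u j) * Cbarpoly n u))
          + Bpoly n u ^ m * ((k : MvPolynomial (Fin (2 * n) ⊕ Fin (2 * n)) ℂ)
              * Tpoly n u ^ (k - 1))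
              * (∑ j, (C (u j) * Apoly n u + C ((starRingEnd ℂ) (vv n u j)) * Cpoly n u)
                * (C ((starRingEnd ℂ) (u j)) * Bpoly n u + C (vv n u j) * Cbarpoly n u))
          + Bpoly n u ^ m * Tpoly n u ^ k
              * (∑ j, (C ((starRingEnd ℂ) (u j)) * C (u j)
                  + C (vv n u j) * C ((starRingEnd ℂ) (vv n u j))))) := by
        simp only [h1, pderiv_C_mul, h2]
        rw [Finset.mul_sum]
        simp only [Finset.mul_sum, Finset.sum_mul]
        rw [← Finset.sum_add_distrib, ← Finset.sum_add_distrib]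
        rw [Finset.mul_sum]
        apply Finset.sum_congr rfl; intro j _
        ring
    _ = C ((((k + 1) * (m + k + 2) : ℕ) : ℂ) * u2 n u)
          * (Bpoly n u ^ m * Tpoly n u ^ k) := by
        rw [sum_CD1, sum_D2D1, sum_diag]
        have hB : (m : MvPolynomial (Fin (2 * n) ⊕ Fin (2 * n)) ℂ) * Bpoly n u ^ (m - 1)
            * Bpoly n u = (m : MvPolynomial (Fin (2 * n) ⊕ Fin (2 * n)) ℂ) * Bpoly n u ^ m :=
          cast_pow_pred _ m
        have hT : (k : MvPolynomial (Fin (2 * n) ⊕ Fin (2 * n)) ℂ) * Tpoly n u ^ (k - 1)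
            * Tpoly n u = (k : MvPolynomial (Fin (2 * n) ⊕ Fin (2 * n)) ℂ) * Tpoly n u ^ k :=
          cast_pow_pred _ k
        have e1 : (C (u2 n u) : MvPolynomial (Fin (2 * n) ⊕ Fin (2 * n)) ℂ)
            = C (u2 n u) := rfl
        calc C (((k + 1 : ℕ) : ℂ)) * (
              ((m : MvPolynomial (Fin (2 * n) ⊕ Fin (2 * n)) ℂ) * Bpoly n u ^ (m - 1))
                * Tpoly n u ^ k * (C (u2 n u) * Bpoly n u)
              + Bpoly n u ^ m * ((k : MvPolynomial (Fin (2 * n) ⊕ Fin (2 * n)) ℂ)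
                  * Tpoly n u ^ (k - 1)) * (C (u2 n u) * Tpoly n u)
              + Bpoly n u ^ m * Tpoly n u ^ k * C (2 * u2 n u))
            = C (((k + 1 : ℕ) : ℂ)) * C (u2 n u) * (
              ((m : MvPolynomial (Fin (2 * n) ⊕ Fin (2 * n)) ℂ) * Bpoly n u ^ (m - 1)
                * Bpoly n u) * Tpoly n u ^ k
              + Bpoly n u ^ m * ((k : MvPolynomial (Fin (2 * n) ⊕ Fin (2 * n)) ℂ)
                  * Tpoly n u ^ (k - 1) * Tpoly n u)
              + 2 * (Bpoly n u ^ m * Tpoly n u ^ k)) := by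
              simp only [map_mul, map_natCast, map_ofNat]
              push_cast
              ring
          _ = C ((((k + 1) * (m + k + 2) : ℕ) : ℂ) * u2 n u)
              * (Bpoly n u ^ m * Tpoly n u ^ k) := by
              rw [hB, hT]
              simp only [map_mul, map_natCast, map_ofNat]
              push_cast
              ring

lemma clap_C_mul (a : ℂ) (P : MvPolynomial (Fin (2 * n) ⊕ Fin (2 * n)) ℂ) :
    clap n (C a * P) = C a * clap n P := by
  simp [clap, pderiv_C_mul, Finset.mul_sum]

lemma iter_clap (p q : ℕ) (hpq : p ≤ q) (j : ℕ) (hj : j ≤ p) :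
    (clap n)^[j] (Zsymp n p q u)
      = C ((((q - p + 1 : ℕ) : ℂ) / ((p.factorial : ℂ) * ((q + 1).factorial : ℂ)))
            * ((p.descFactorial j * (q + 1).descFactorial j : ℕ) : ℂ) * u2 n u ^ j)
          * (Bpoly n u ^ (q - p) * Tpoly n u ^ (p - j)) := by
  induction j with
  | zero => simp [Zsymp, Tpoly, mul_assoc]
  | succ j ih =>
    have hj' : j ≤ p := by omega
    rw [Function.iterate_succ_apply', ih hj']
    have hsplit : p - j = (p - (j + 1)) + 1 := by omega
    rw [clap_C_mul, hsplit, clap_BT]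
    have hnat : ((p - (j + 1)) + 1) * ((q - p) + (p - (j + 1)) + 2)
        * (p.descFactorial j * (q + 1).descFactorial j)
        = p.descFactorial (j + 1) * (q + 1).descFactorial (j + 1) := by
      rw [Nat.descFactorial_succ, Nat.descFactorial_succ]
      have e1 : p - (j + 1) + 1 = p - j := by omega
      have e2 : q - p + (p - (j + 1)) + 2 = (q + 1) - j := by omega
      rw [e1, e2]; ring
    have hc : ((p.descFactorial (j + 1) * (q + 1).descFactorial (j + 1) : ℕ) : ℂ)
        = ((((p - (j + 1)) + 1) * ((q - p) + (p - (j + 1)) + 2) : ℕ) : ℂ)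
            * ((p.descFactorial j * (q + 1).descFactorial j : ℕ) : ℂ) := by
      push_cast [← hnat]; ring
    rw [hc]
    simp only [map_mul, map_pow, pow_succ]
    ring

lemma Svand (n p q l : ℕ) (hn : 2 ≤ n) (hpq : p ≤ q) (hl : l ≤ p) :
    ∑ j ∈ Finset.Ico l (p + 1),
        (p + 2 * n - 3).choose (p - j) * ((q + 1).choose j * j.choose l)
      = (q + 1).choose l * (p + q + 2 * n - 2 - l).choose (p - l) := by
  have h1 : ∑ j ∈ Finset.Ico l (p + 1),
      (p + 2 * n - 3).choose (p - j) * ((q + 1).choose j * j.choose l)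
      = ∑ j ∈ Finset.Ico l (p + 1),
        (q + 1).choose l * ((q + 1 - l).choose (j - l) * (p + 2 * n - 3).choose (p - j)) := by
    apply Finset.sum_congr rfl
    intro j hj
    rw [Finset.mem_Ico] at hj
    rw [Nat.choose_mul (by omega)]
    ring
  rw [h1, ← Finset.mul_sum]
  congr 1
  rw [Finset.sum_Ico_eq_sum_range]
  have h2 : ∀ k, (q + 1 - l).choose ((l + k) - l) * (p + 2 * n - 3).choose (p - (l + k))
      = (q + 1 - l).choose k * (p + 2 * n - 3).choose ((p - l) - k) := by
    intro k
    congr 2 <;> omega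
  simp only [h2]
  have h3 : p + q + 2 * n - 2 - l = (q + 1 - l) + (p + 2 * n - 3) := by omega
  rw [h3, Nat.add_choose_eq, Finset.Nat.sum_antidiagonal_eq_sum_range_succ_mk]
  have h4 : p + 1 - l = (p - l) + 1 := by omega
  rw [h4]

lemma NID (a p q l : ℕ) (hl : l ≤ p) (hpa : p ≤ a) :
    (a + 1) * (a - l).factorial
        * ((l.factorial * p.choose l) * (l.factorial * (q + 1).choose l))
        * a.factorial * (q + 1).factorial
      = (q + 1).factorial * (a - p).factorial
          * ((q + 1).choose l * (a - l).choose (p - l)) * l.factorial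
          * (a + 1).factorial * p.factorial := by
  apply Nat.eq_of_mul_eq_mul_right (Nat.factorial_pos (p - l))
  have c1 : p.choose l * l.factorial * (p - l).factorial = p.factorial :=
    Nat.choose_mul_factorial_mul_factorial hl
  have c2 : (a - l).choose (p - l) * (p - l).factorial * (a - p).factorial
      = (a - l).factorial := by
    have h := Nat.choose_mul_factorial_mul_factorial (show p - l ≤ a - l by omega)
    rwa [show a - l - (p - l) = a - p by omega] at h
  have L : ((a + 1) * (a - l).factorial
        * ((l.factorial * p.choose l) * (l.factorial * (q + 1).choose l))
        * a.factorial * (q + 1).factorial) * (p - l).factorial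
      = ((a + 1) * a.factorial) * (a - l).factorial * l.factorial * (q + 1).choose l
          * (q + 1).factorial * p.factorial := by rw [← c1]; ring
  have R : ((q + 1).factorial * (a - p).factorial
          * ((q + 1).choose l * (a - l).choose (p - l)) * l.factorial
          * (a + 1).factorial * p.factorial) * (p - l).factorial
      = ((a + 1) * a.factorial) * (a - l).factorial * l.factorial * (q + 1).choose l
          * (q + 1).factorial * p.factorial := by
    rw [← c2, Nat.factorial_succ a]; ring
  rw [L, R]

lemma scalar_id (n p q l : ℕ) (hn : 2 ≤ n) (hpq : p ≤ q) (hl : l ≤ p) :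
    betaCoeff n p q l
        * ((((q - p + 1 : ℕ) : ℂ) / ((p.factorial : ℂ) * ((q + 1).factorial : ℂ)))
            * ((p.descFactorial l * (q + 1).descFactorial l : ℕ) : ℂ))
      = cConst n p q * (-1 : ℂ) ^ l
          * (((q + 1).choose l * (p + q + 2 * n - 2 - l).choose (p - l) : ℕ) : ℂ) := by
  have e1 : 2 * n - 1 + p + q = (p + q + 2 * n - 2) + 1 := by omega
  have e2 : 2 * n - 2 + p + q - l = (p + q + 2 * n - 2) - l := by omega
  have e4 : q + 2 * n - 2 = (p + q + 2 * n - 2) - p := by omega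
  rw [betaCoeff, cConst, e1, e2, e4]
  set a := p + q + 2 * n - 2 with ha
  have hpa : p ≤ a := by omega
  rw [Nat.descFactorial_eq_factorial_mul_choose, Nat.descFactorial_eq_factorial_mul_choose]
  have hfl : (l.factorial : ℂ) ≠ 0 := by exact_mod_cast l.factorial_ne_zero
  have hfa : ((a + 1).factorial : ℂ) ≠ 0 := by exact_mod_cast (a + 1).factorial_ne_zero
  have hfp : (p.factorial : ℂ) ≠ 0 := by exact_mod_cast p.factorial_ne_zero
  have hfq : ((q + 1).factorial : ℂ) ≠ 0 := by exact_mod_cast (q + 1).factorial_ne_zero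
  have hfa2 : ((a).factorial : ℂ) ≠ 0 := by exact_mod_cast (a).factorial_ne_zero
  have hN : (((a : ℂ) + 1) * ((a - l).factorial : ℂ)
        * (((l.factorial : ℂ) * (p.choose l : ℂ)) * ((l.factorial : ℂ) * ((q + 1).choose l : ℂ)))
        * (a.factorial : ℂ) * ((q + 1).factorial : ℂ))
      = (((q + 1).factorial : ℂ) * ((a - p).factorial : ℂ)
          * (((q + 1).choose l : ℂ) * (((a - l).choose (p - l)) : ℂ)) * (l.factorial : ℂ)
          * (((a + 1).factorial : ℂ)) * (p.factorial : ℂ)) := by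
    exact_mod_cast NID a p q l hl hpa
  field_simp
  push_cast [Nat.cast_sub hpq]
  apply mul_right_cancel₀ hfq
  linear_combination (((q : ℂ) - (p : ℂ) + 1)) * hN

end AUX

theorem statement11 (n p q : ℕ) (hn : 2 ≤ n) (hpq : p ≤ q) (u : Fin (2 * n) → ℂ) :
    (∑ j ∈ Finset.range (p + 1),
        C (betaCoeff n p q j) * r2poly n ^ j * (clap n)^[j] (Zsymp n p q u))
      = C (cConst n p q) * Bpoly n u ^ (q - p) *
          ∑ j ∈ Finset.range (p + 1),
            C ((((p + 2 * n - 3).choose (p - j) : ℕ) : ℂ) * (((q + 1).choose j : ℕ) : ℂ)) *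
              ((Apoly n u * Bpoly n u + Cpoly n u * Cbarpoly n u) - r2poly n * C (u2 n u)) ^ j *
              (Apoly n u * Bpoly n u + Cpoly n u * Cbarpoly n u) ^ (p - j) := by
  have hTdef : Apoly n u * Bpoly n u + Cpoly n u * Cbarpoly n u = Tpoly n u := rfl
  rw [hTdef]
  have key : ∀ l, l ≤ p →
      betaCoeff n p q l
          * ((((q - p + 1 : ℕ) : ℂ) / ((p.factorial : ℂ) * ((q + 1).factorial : ℂ)))
              * ((p.descFactorial l * (q + 1).descFactorial l : ℕ) : ℂ)) * u2 n u ^ l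
        = cConst n p q * ((-1 : ℂ) ^ l * u2 n u ^ l
            * ((∑ j ∈ Finset.Ico l (p + 1),
                (p + 2 * n - 3).choose (p - j) * ((q + 1).choose j * j.choose l) : ℕ) : ℂ)) := by
    intro l hl
    rw [Svand n p q l hn hpq hl]
    have h := scalar_id n p q l hn hpq hl
    push_cast at h ⊢
    linear_combination u2 n u ^ l * h
  have hL : (∑ j ∈ Finset.range (p + 1),
        C (betaCoeff n p q j) * r2poly n ^ j * (clap n)^[j] (Zsymp n p q u))
      = ∑ l ∈ Finset.range (p + 1),
          C (cConst n p q * ((-1 : ℂ) ^ l * u2 n u ^ l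
              * ((∑ j ∈ Finset.Ico l (p + 1),
                  (p + 2 * n - 3).choose (p - j) * ((q + 1).choose j * j.choose l) : ℕ) : ℂ)))
            * (r2poly n ^ l * (Bpoly n u ^ (q - p) * Tpoly n u ^ (p - l))) := by
    apply Finset.sum_congr rfl
    intro l hl
    rw [Finset.mem_range] at hl
    have hl' : l ≤ p := by omega
    rw [iter_clap u p q hpq l hl', ← key l hl']
    simp only [map_mul]
    ring
  rw [hL, Finset.mul_sum]
  have hterm : ∀ j ∈ Finset.range (p + 1),
      C (cConst n p q) * Bpoly n u ^ (q - p)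
          * (C ((((p + 2 * n - 3).choose (p - j) : ℕ) : ℂ) * (((q + 1).choose j : ℕ) : ℂ))
              * (Tpoly n u - r2poly n * C (u2 n u)) ^ j * Tpoly n u ^ (p - j))
        = ∑ l ∈ Finset.range (j + 1),
            C (cConst n p q * ((-1 : ℂ) ^ l * u2 n u ^ l
                * (((p + 2 * n - 3).choose (p - j) * ((q + 1).choose j * j.choose l) : ℕ) : ℂ)))
              * (r2poly n ^ l * (Bpoly n u ^ (q - p) * Tpoly n u ^ (p - l))) := by
    intro j hj
    rw [Finset.mem_range] at hj
    have hj' : j ≤ p := by omega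
    rw [sub_pow]
    conv_rhs => rw [← Finset.sum_range_reflect]
    simp only [Finset.mul_sum, Finset.sum_mul]
    apply Finset.sum_congr rfl
    intro m hm
    rw [Finset.mem_range] at hm
    have hm' : m ≤ j := by omega
    have hred : j + 1 - 1 - m = j - m := by omega
    rw [hred]
    have hc : j.choose (j - m) = j.choose m := Nat.choose_symm hm'
    have hsgn : ((-1 : MvPolynomial (Fin (2 * n) ⊕ Fin (2 * n)) ℂ)) ^ (m + j)
        = (-1 : MvPolynomial (Fin (2 * n) ⊕ Fin (2 * n)) ℂ) ^ (j - m) := by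
      rw [show m + j = (j - m) + 2 * m by omega, pow_add, pow_mul]
      simp
    have hT : p - (j - m) = m + (p - j) := by omega
    simp only [map_mul, map_pow, map_neg, map_one, map_natCast, Nat.cast_mul, mul_pow]
    rw [hc, hsgn, hT, pow_add]
    ring
  rw [Finset.sum_congr rfl hterm]
  simp only [Finset.range_eq_Ico]
  rw [← Finset.sum_Ico_Ico_comm]
  apply Finset.sum_congr rfl
  intro l _
  rw [← Finset.sum_mul, ← map_sum, ← Finset.mul_sum, ← Finset.mul_sum, ← Nat.cast_sum]

end
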